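/- If V is a valid value function on a deterministic task, then V⟨s⟩ ≤ optval(s) for every state s. -/
import Mathlib


variable {S A : Type*}

/-- The state value `V⟨s⟩ = max_{b ∈ A} V(s, b)`. -/
def sval [Fintype A] (V : S → A → ℕ) (s : S) : ℕ := Finset.univ.sup (V s)

/-- The trajectory of states visited in a deterministic task, starting at `s`
and following the action stream `as`. -/
def traj (δ : S → A → S) (s : S) (as : ℕ → A) : ℕ → S
  | 0 => s
  | i + 1 => δ (traj δ s as i) (as i)

/-- The value of the action-path of length `n` starting at `s` and following `as`:
`pval p = max_i clamp(R(sᵢ,aᵢ) − i·K)` (1-based `i`). -/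
def pathVal (δ : S → A → S) (R : S → A → ℕ) (K : ℕ) (s : S) (as : ℕ → A) (n : ℕ) : ℕ :=
  (Finset.range n).sup fun i => ((R (traj δ s as i) (as i) : ℤ) - ((i : ℕ) + 1) * K).toNat

/-- The optimal value of a state: the largest path value among action-paths starting at `s`. -/
noncomputable def optval (δ : S → A → S) (R : S → A → ℕ) (K : ℕ) (s : S) : ℕ :=
  sSup {v | ∃ (n : ℕ) (as : ℕ → A), 0 < n ∧ v = pathVal δ R K s as n}

/-- `V` is valid: `V(s,a) ≤ clamp(max(V⟨δ(s,a)⟩, R(s,a)) − K)` for all `(s,a)`. -/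
def validV [Fintype A] (δ : S → A → S) (R : S → A → ℕ) (K : ℕ) (V : S → A → ℕ) : Prop :=
  ∀ s a, V s a ≤ (max ((sval V (δ s a) : ℤ)) ((R s a : ℤ)) - (K : ℤ)).toNat

/-- `V` is consistent: for every state `s` and every preferred action `a` at `s`,
`V⟨s⟩ = clamp(max(V⟨δ(s,a)⟩, R(s,a)) − K)`. -/
def consistentV [Fintype A] (δ : S → A → S) (R : S → A → ℕ) (K : ℕ) (V : S → A → ℕ) : Prop :=
  ∀ s a, V s a = sval V s →
    sval V s = (max ((sval V (δ s a) : ℤ)) ((R s a : ℤ)) - (K : ℤ)).toNat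

/-- Prepend an action to an action stream. -/
def consA (a : A) (as : ℕ → A) : ℕ → A
  | 0 => a
  | n + 1 => as n

lemma traj_consA (δ : S → A → S) (s : S) (a : A) (as : ℕ → A) :
    ∀ i, traj δ s (consA a as) (i + 1) = traj δ (δ s a) as i
  | 0 => rfl
  | i + 1 => by
    show δ (traj δ s (consA a as) (i + 1)) (consA a as (i + 1)) = _
    rw [traj_consA δ s a as i]
    rfl

lemma pathVal_le_bound [Fintype S] [Fintype A] (δ : S → A → S) (R : S → A → ℕ) (K : ℕ)
    (s : S) (as : ℕ → A) (n : ℕ) :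
    pathVal δ R K s as n ≤ Finset.univ.sup (fun p : S × A => R p.1 p.2) := by
  apply Finset.sup_le
  intro i _
  have hb : R (traj δ s as i) (as i) ≤ Finset.univ.sup (fun p : S × A => R p.1 p.2) :=
    Finset.le_sup (f := fun p : S × A => R p.1 p.2) (Finset.mem_univ (traj δ s as i, as i))
  have hc : (0 : ℤ) ≤ ((i : ℕ) + 1) * K := by positivity
  set c : ℤ := ((i : ℕ) + 1) * K with hcdef
  omega

lemma optval_bddAbove [Fintype S] [Fintype A] (δ : S → A → S) (R : S → A → ℕ) (K : ℕ)
    (s : S) :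
    BddAbove {v | ∃ (n : ℕ) (as : ℕ → A), 0 < n ∧ v = pathVal δ R K s as n} := by
  refine ⟨Finset.univ.sup (fun p : S × A => R p.1 p.2), ?_⟩
  rintro v ⟨n, as, -, rfl⟩
  exact pathVal_le_bound δ R K s as n

lemma pathVal_consA_ge (δ : S → A → S) (R : S → A → ℕ) (K : ℕ)
    (s : S) (a : A) (as : ℕ → A) (n : ℕ) :
    pathVal δ R K (δ s a) as n ≤ pathVal δ R K s (consA a as) (n + 1) + K := by
  apply Finset.sup_le
  intro j hj
  have hj' : j + 1 ∈ Finset.range (n + 1) := by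
    simp only [Finset.mem_range] at hj ⊢; omega
  have hterm : ((R (traj δ s (consA a as) (j + 1)) (consA a as (j + 1)) : ℤ)
      - ((j + 1 : ℕ) + 1) * K).toNat ≤ pathVal δ R K s (consA a as) (n + 1) :=
    Finset.le_sup (f := fun i => ((R (traj δ s (consA a as) i) (consA a as i) : ℤ)
      - ((i : ℕ) + 1) * K).toNat) hj'
  rw [traj_consA δ s a as j] at hterm
  have hca : consA a as (j + 1) = as j := rfl
  rw [hca] at hterm
  have hcast : (((j + 1 : ℕ) : ℤ) + 1) * K = ((j : ℤ) + 1) * K + K := by push_cast; ring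
  rw [hcast] at hterm
  set x : ℤ := (R (traj δ (δ s a) as j) (as j) : ℤ)
  set c : ℤ := ((j : ℤ) + 1) * K
  omega

/-- If `V` is valid on a deterministic task, then `V⟨s⟩ ≤ optval(s)` for every state. -/
theorem valid_sval_le_optval [Fintype S] [Fintype A]
    (δ : S → A → S) (R : S → A → ℕ) (K : ℕ) (hK : 1 ≤ K)
    (V : S → A → ℕ) (hvalid : validV δ R K V) :
    ∀ s : S, sval V s ≤ optval δ R K s := by
  set M := Finset.univ.sup (sval V) with hM
  have key : ∀ d : ℕ, ∀ s : S, M - sval V s ≤ d → sval V s ≤ optval δ R K s := by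
    intro d
    induction d with
    | zero =>
      intro s hd
      rcases Nat.eq_zero_or_pos (sval V s) with h0 | hpos
      · omega
      -- sval V s > 0, pick a maximizing action
      have hA : (Finset.univ : Finset A).Nonempty := by
        by_contra h
        rw [Finset.not_nonempty_iff_eq_empty] at h
        have : sval V s = 0 := by simp [sval, h]
        omega
      obtain ⟨a, -, ha⟩ := Finset.exists_mem_eq_sup Finset.univ hA (V s)
      have hv := hvalid s a
      have hsv : sval V s = V s a := ha
      have hm1 : (sval V (δ s a) : ℤ) ≤ max (sval V (δ s a) : ℤ) (R s a : ℤ) := le_max_left _ _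
      have hm2 : (R s a : ℤ) ≤ max (sval V (δ s a) : ℤ) (R s a : ℤ) := le_max_right _ _
      have hm3 : max (sval V (δ s a) : ℤ) (R s a : ℤ) = (sval V (δ s a) : ℤ) ∨
          max (sval V (δ s a) : ℤ) (R s a : ℤ) = (R s a : ℤ) := max_choice _ _
      have hsM : sval V s ≤ M := Finset.le_sup (f := sval V) (Finset.mem_univ s)
      have hs'M : sval V (δ s a) ≤ M := Finset.le_sup (f := sval V) (Finset.mem_univ (δ s a))
      -- since M - sval V s ≤ 0 and sval V (δ s a) ≤ M, the max must be R s a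
      have hR : (sval V s : ℤ) + K ≤ (R s a : ℤ) := by omega
      -- the one-step path with action a attains at least sval V s
      have hp : sval V s ≤ pathVal δ R K s (fun _ => a) 1 := by
        have : pathVal δ R K s (fun _ => a) 1 = ((R s a : ℤ) - (0 + 1) * K).toNat := by
          simp [pathVal, Finset.range_one, traj]
        rw [this]
        omega
      exact hp.trans (le_csSup (optval_bddAbove δ R K s) ⟨1, fun _ => a, one_pos, rfl⟩)
    | succ e ih =>
      intro s hd
      rcases Nat.eq_zero_or_pos (sval V s) with h0 | hpos
      · omega
      have hA : (Finset.univ : Finset A).Nonempty := by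
        by_contra h
        rw [Finset.not_nonempty_iff_eq_empty] at h
        have : sval V s = 0 := by simp [sval, h]
        omega
      obtain ⟨a, -, ha⟩ := Finset.exists_mem_eq_sup Finset.univ hA (V s)
      have hv := hvalid s a
      have hsv : sval V s = V s a := ha
      have hm1 : (sval V (δ s a) : ℤ) ≤ max (sval V (δ s a) : ℤ) (R s a : ℤ) := le_max_left _ _
      have hm2 : (R s a : ℤ) ≤ max (sval V (δ s a) : ℤ) (R s a : ℤ) := le_max_right _ _
      have hm3 : max (sval V (δ s a) : ℤ) (R s a : ℤ) = (sval V (δ s a) : ℤ) ∨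
          max (sval V (δ s a) : ℤ) (R s a : ℤ) = (R s a : ℤ) := max_choice _ _
      have hsM : sval V s ≤ M := Finset.le_sup (f := sval V) (Finset.mem_univ s)
      have hs'M : sval V (δ s a) ≤ M := Finset.le_sup (f := sval V) (Finset.mem_univ (δ s a))
      have hmax : (sval V s : ℤ) + K ≤ max (sval V (δ s a) : ℤ) (R s a : ℤ) := by omega
      rcases hm3 with hmS | hmR
      · -- max is sval V (δ s a)
        have hS : (sval V s : ℤ) + K ≤ (sval V (δ s a) : ℤ) := by omega
        have hSn : sval V s + K ≤ sval V (δ s a) := by exact_mod_cast hS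
        have hrec : M - sval V (δ s a) ≤ e := by omega
        have hIH : sval V (δ s a) ≤ optval δ R K (δ s a) := ih (δ s a) hrec
        -- optval (δ s a) is attained by some path
        have hne : {v | ∃ (n : ℕ) (as : ℕ → A), 0 < n ∧ v = pathVal δ R K (δ s a) as n}.Nonempty :=
          ⟨pathVal δ R K (δ s a) (fun _ => a) 1, 1, fun _ => a, one_pos, rfl⟩
        have hmem := Nat.sSup_mem hne (optval_bddAbove δ R K (δ s a))
        obtain ⟨n, as, hn, hEq⟩ := hmem
        have hcons := pathVal_consA_ge δ R K s a as n
        have hle : sval V s ≤ pathVal δ R K s (consA a as) (n + 1) := by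
          have : sval V s + K ≤ pathVal δ R K (δ s a) as n := by
            have : optval δ R K (δ s a) = pathVal δ R K (δ s a) as n := hEq
            omega
          omega
        exact hle.trans (le_csSup (optval_bddAbove δ R K s)
          ⟨n + 1, consA a as, Nat.succ_pos n, rfl⟩)
      · -- max is R s a
        have hR : (sval V s : ℤ) + K ≤ (R s a : ℤ) := by omega
        have hp : sval V s ≤ pathVal δ R K s (fun _ => a) 1 := by
          have : pathVal δ R K s (fun _ => a) 1 = ((R s a : ℤ) - (0 + 1) * K).toNat := by
            simp [pathVal, Finset.range_one, traj]
          rw [this]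
          omega
        exact hp.trans (le_csSup (optval_bddAbove δ R K s) ⟨1, fun _ => a, one_pos, rfl⟩)
  intro s
  exact key M s (Nat.sub_le _ _)
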